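/- Let $R$ be an associative unital $\mathbb{Q}$-algebra, let $A \in R$, let $\gamma \in R$ be a central element, and let $(P_n)_{n \geq 1}$ be a sequence of elements of $R$. Define elements $H_n \in R$ for $n \geq 0$ by the formal power series identity $\sum_{n \geq 0} H_n z^n = \exp\big(\sum_{n \geq 1} P_n z^n / n\big)$ in $R[[z]]$ (so $H_0 = 1$), and set $H_{-1} = 0$. If $A (H_n - H_{n-1}) = \gamma^n (H_n - H_{n-1}) A$ for all $n \geq 0$, then $A P_n - \gamma^n P_n A = A (1 - \gamma^n)$ for all $n \geq 1$. -/

import Mathlib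

open scoped BigOperators

/-- The exponential `exp(X) = ∑_{k ≥ 0} X^k / k!` of a formal power series `X` with zero
constant term, over a (possibly noncommutative) `ℚ`-algebra `R`. -/
noncomputable def expPS {R : Type*} [Ring R] [Algebra ℚ R] (X : PowerSeries R) :
    PowerSeries R :=
  PowerSeries.mk fun n =>
    ∑ k ∈ Finset.range (n + 1), (k.factorial : ℚ)⁻¹ • PowerSeries.coeff n (X ^ k)

open PowerSeries Finset

section Aux

theorem PowerSeries.coeff_derivativeFun' {S : Type*} [CommSemiring S] (f : PowerSeries S) (n : ℕ) :
    coeff n (derivativeFun f) = coeff (n + 1) f * (n + 1) :=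
  coeff_derivative f n

theorem coeff_expPS {R : Type*} [Ring R] [Algebra ℚ R] (X : PowerSeries R) (n : ℕ) :
    coeff n (expPS X) = ∑ k ∈ Finset.range (n + 1), (k.factorial : ℚ)⁻¹ • coeff n (X ^ k) :=
  coeff_mk _ _

theorem coeff_pow_zero_of_lt {R : Type*} [Ring R] {F : PowerSeries R}
    (hF : constantCoeff F = 0) :
    ∀ k n : ℕ, n < k → coeff n (F ^ k) = 0 := by
  intro k
  induction k with
  | zero => intro n h; exact absurd h (Nat.not_lt_zero n)
  | succ k ih =>
    intro n hn
    rw [pow_succ', coeff_mul]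
    apply Finset.sum_eq_zero
    rintro ⟨i, j⟩ hij
    rw [Finset.HasAntidiagonal.mem_antidiagonal] at hij
    rcases Nat.eq_zero_or_pos i with hi | hi
    · subst hi; simp [coeff_zero_eq_constantCoeff, hF]
    · rw [ih j (by omega), mul_zero]

theorem central_mul_comm {R : Type*} [Ring R] {C : PowerSeries R}
    (hC : ∀ n (r : R), coeff n C * r = r * coeff n C)
    (g : PowerSeries R) : C * g = g * C := by
  ext n
  rw [coeff_mul, coeff_mul, ← Finset.Nat.sum_antidiagonal_swap]
  refine Finset.sum_congr rfl fun p _ => ?_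
  simp only [Prod.fst_swap, Prod.snd_swap]
  exact hC p.2 _

theorem fact_inv_choose (i j : ℕ) :
    ((i + j).factorial : ℚ)⁻¹ * ((i + j).choose i : ℚ)
      = (i.factorial : ℚ)⁻¹ * (j.factorial : ℚ)⁻¹ := by
  have h : ((i + j).choose i : ℚ) * i.factorial * j.factorial = (i + j).factorial := by
    rw [Nat.choose_symm_add]
    exact_mod_cast congrArg (Nat.cast : ℕ → ℚ) (Nat.add_choose_mul_factorial_mul_factorial i j)
  have h1 : (i.factorial : ℚ) ≠ 0 := Nat.cast_ne_zero.mpr (Nat.factorial_ne_zero i)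
  have h2 : (j.factorial : ℚ) ≠ 0 := Nat.cast_ne_zero.mpr (Nat.factorial_ne_zero j)
  have h3 : ((i + j).factorial : ℚ) ≠ 0 := Nat.cast_ne_zero.mpr (Nat.factorial_ne_zero _)
  field_simp
  linarith [h]

theorem expPS_add {R : Type*} [Ring R] [Algebra ℚ R] {C D : PowerSeries R}
    (hC : ∀ n (r : R), coeff n C * r = r * coeff n C)
    (hC0 : constantCoeff C = 0) (hD0 : constantCoeff D = 0) :
    expPS (C + D) = expPS C * expPS D := by
  have hcd : Commute C D := central_mul_comm hC D
  have hvan : ∀ i j m : ℕ, m < i + j → coeff m (C ^ i * D ^ j) = 0 := by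
    intro i j m hm
    rw [coeff_mul]
    apply Finset.sum_eq_zero
    rintro ⟨p, q⟩ hpq
    rw [Finset.HasAntidiagonal.mem_antidiagonal] at hpq
    rcases lt_or_ge p i with h | h
    · rw [coeff_pow_zero_of_lt hC0 i p h, zero_mul]
    · rw [coeff_pow_zero_of_lt hD0 j q (by omega), mul_zero]
  ext n
  set g : ℕ × ℕ → R := fun p =>
    ((p.1.factorial : ℚ)⁻¹ * (p.2.factorial : ℚ)⁻¹) • coeff n (C ^ p.1 * D ^ p.2) with hg
  have lhs_eq : coeff n (expPS (C + D))
      = ∑ p ∈ Finset.range (n+1) ×ˢ Finset.range (n+1), g p := by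
    rw [coeff_expPS]
    have step1 : ∀ k ∈ Finset.range (n+1),
        (k.factorial : ℚ)⁻¹ • coeff n ((C + D) ^ k) = ∑ m ∈ antidiagonal k, g m := by
      intro k _
      rw [hcd.add_pow', map_sum, Finset.smul_sum]
      refine Finset.sum_congr rfl fun m hm => ?_
      rw [Finset.HasAntidiagonal.mem_antidiagonal] at hm
      rw [map_nsmul, ← Nat.cast_smul_eq_nsmul ℚ, smul_smul, hg]
      subst hm
      rw [fact_inv_choose]
    rw [Finset.sum_congr rfl step1]
    rw [← Finset.sum_biUnion]
    · apply Finset.sum_subset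
      · intro p hp
        simp only [Finset.mem_biUnion, Finset.mem_range, Finset.HasAntidiagonal.mem_antidiagonal] at hp
        obtain ⟨k, hk, hpk⟩ := hp
        simp only [Finset.mem_product, Finset.mem_range]
        omega
      · intro p hp hnp
        simp only [Finset.mem_biUnion, Finset.mem_range, Finset.HasAntidiagonal.mem_antidiagonal] at hnp
        have : n < p.1 + p.2 := by
          by_contra hle
          exact hnp ⟨p.1 + p.2, by omega, rfl⟩
        rw [hg]
        simp only
        rw [hvan p.1 p.2 n this, smul_zero]
    · intro a _ b _ hab
      simp only [Finset.disjoint_left, Finset.HasAntidiagonal.mem_antidiagonal]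
      intro p hpa hpb
      exact hab (hpa ▸ hpb.symm ▸ rfl)
  have rhs_eq : coeff n (expPS C * expPS D)
      = ∑ p ∈ Finset.range (n+1) ×ˢ Finset.range (n+1), g p := by
    rw [coeff_mul]
    have step1 : ∀ pq ∈ antidiagonal n,
        coeff pq.1 (expPS C) * coeff pq.2 (expPS D) =
        ∑ i ∈ Finset.range (n+1), ∑ j ∈ Finset.range (n+1),
          ((i.factorial : ℚ)⁻¹ * (j.factorial : ℚ)⁻¹)
            • (coeff pq.1 (C ^ i) * coeff pq.2 (D ^ j)) := by
      rintro ⟨p, q⟩ hpq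
      rw [Finset.HasAntidiagonal.mem_antidiagonal] at hpq
      rw [coeff_expPS, coeff_expPS]
      rw [Finset.sum_subset (Finset.range_subset_range.mpr (by omega : p + 1 ≤ n + 1))
          (fun i _ hi => by
            rw [coeff_pow_zero_of_lt hC0 i p
              (by simp only [Finset.mem_range] at hi ⊢; omega), smul_zero]),
        Finset.sum_subset (Finset.range_subset_range.mpr (by omega : q + 1 ≤ n + 1))
          (fun j _ hj => by
            rw [coeff_pow_zero_of_lt hD0 j q
              (by simp only [Finset.mem_range] at hj ⊢; omega), smul_zero]),
        Finset.sum_mul_sum]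
      refine Finset.sum_congr rfl fun i _ => Finset.sum_congr rfl fun j _ => ?_
      rw [smul_mul_smul_comm]
    rw [Finset.sum_congr rfl step1, Finset.sum_comm]
    rw [Finset.sum_product]
    refine Finset.sum_congr rfl fun i _ => ?_
    rw [Finset.sum_comm]
    refine Finset.sum_congr rfl fun j _ => ?_
    rw [hg]
    simp only
    rw [coeff_mul, Finset.smul_sum]
  rw [lhs_eq, rhs_eq]

theorem derivativeFun_pow {S : Type*} [CommRing S] (F : PowerSeries S) (k : ℕ) :
    derivativeFun (F ^ (k + 1)) = (k + 1) • (F ^ k * derivativeFun F) := by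
  induction k with
  | zero => simp
  | succ k ih =>
    rw [pow_succ, derivativeFun_mul, ih, smul_eq_mul, smul_eq_mul]
    rw [succ_nsmul (F ^ (k+1) * F.derivativeFun) (k+1)]
    rw [mul_smul_comm, ← mul_assoc, ← pow_succ']
    abel

theorem deriv_expPS {S : Type*} [CommRing S] [Algebra ℚ S] (F : PowerSeries S)
    (hF : constantCoeff F = 0) :
    derivativeFun (expPS F) = derivativeFun F * expPS F := by
  ext n
  rw [coeff_derivativeFun', coeff_expPS, Finset.sum_mul]
  have step1 : ∀ k ∈ Finset.range (n + 2),
      ((k.factorial : ℚ)⁻¹ • coeff (n+1) (F ^ k)) * ((n : S) + 1) =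
      (k.factorial : ℚ)⁻¹ • coeff n (derivativeFun (F ^ k)) := by
    intro k _
    rw [smul_mul_assoc, coeff_derivativeFun']
  rw [Finset.sum_congr rfl step1]
  rw [Finset.sum_range_succ']
  have h0 : (Nat.factorial 0 : ℚ)⁻¹ • coeff n (derivativeFun ((F : PowerSeries S) ^ 0)) = 0 := by
    simp [derivativeFun_one]
  rw [h0, add_zero]
  have step2 : ∀ i ∈ Finset.range (n + 1),
      ((i+1).factorial : ℚ)⁻¹ • coeff n (derivativeFun (F ^ (i+1))) =
      (i.factorial : ℚ)⁻¹ • coeff n (derivativeFun F * F ^ i) := by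
    intro i _
    rw [derivativeFun_pow, map_nsmul, ← Nat.cast_smul_eq_nsmul ℚ, smul_smul,
      Nat.factorial_succ, mul_comm (F ^ i)]
    congr 1
    push_cast
    have h1 : (i.factorial : ℚ) ≠ 0 := Nat.cast_ne_zero.mpr (Nat.factorial_ne_zero i)
    field_simp
  rw [Finset.sum_congr rfl step2]
  rw [coeff_mul]
  have step3 : ∀ pq ∈ antidiagonal n,
      coeff pq.1 (derivativeFun F) * coeff pq.2 (expPS F) =
      ∑ i ∈ Finset.range (n + 1),
        (i.factorial : ℚ)⁻¹ • (coeff pq.1 (derivativeFun F) * coeff pq.2 (F ^ i)) := by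
    rintro ⟨p, q⟩ hpq
    rw [Finset.HasAntidiagonal.mem_antidiagonal] at hpq
    rw [coeff_expPS,
      Finset.sum_subset (Finset.range_subset_range.mpr (by omega : q + 1 ≤ n + 1))
        (fun i _ hi => by
          rw [coeff_pow_zero_of_lt hF i q
            (by simp only [Finset.mem_range] at hi ⊢; omega), smul_zero]),
      Finset.mul_sum]
    exact Finset.sum_congr rfl fun i _ => (mul_smul_comm _ _ _)
  rw [Finset.sum_congr rfl step3, Finset.sum_comm]
  refine Finset.sum_congr rfl fun i _ => ?_
  rw [coeff_mul, Finset.smul_sum]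

noncomputable def Ct : PowerSeries (Polynomial ℚ) :=
  PowerSeries.mk fun n => if n = 0 then 0 else (n : ℚ)⁻¹ • (1 - Polynomial.X ^ n)

noncomputable def Et : PowerSeries (Polynomial ℚ) :=
  PowerSeries.mk fun n => if n = 0 then 1 else 1 - Polynomial.X

theorem hCt0 : constantCoeff Ct = 0 := by
  rw [← coeff_zero_eq_constantCoeff, Ct, coeff_mk, if_pos rfl]

theorem coeff_deriv_Ct (p : ℕ) :
    coeff p (derivativeFun Ct) = 1 - Polynomial.X ^ (p + 1) := by
  rw [coeff_derivativeFun', Ct, coeff_mk]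
  simp only [Nat.succ_ne_zero, if_false]
  rw [mul_comm, show ((p : Polynomial ℚ) + 1) = ((p + 1 : ℕ) : Polynomial ℚ) by push_cast; ring,
    ← nsmul_eq_mul, ← Nat.cast_smul_eq_nsmul ℚ, smul_smul,
    mul_inv_cancel₀ (Nat.cast_ne_zero.mpr (Nat.succ_ne_zero p)), one_smul]

theorem dCt_mul_Et : derivativeFun Ct * Et = derivativeFun Et := by
  ext m : 1
  rw [coeff_mul, coeff_derivativeFun', Finset.Nat.sum_antidiagonal_eq_sum_range_succ_mk]
  simp only [coeff_deriv_Ct, Et, coeff_mk, Nat.succ_ne_zero, if_false]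
  rw [Finset.sum_range_succ]
  have last : (1 - Polynomial.X ^ (m + 1))
        * (if m - m = 0 then (1 : Polynomial ℚ) else 1 - Polynomial.X)
      = (1 - Polynomial.X) * ∑ i ∈ range (m + 1), (Polynomial.X : Polynomial ℚ) ^ i := by
    rw [Nat.sub_self, if_pos rfl, mul_one]
    have h := geom_sum_mul (Polynomial.X : Polynomial ℚ) (m + 1)
    linear_combination h
  rw [last]
  have congr1 : ∀ k ∈ range m,
      (1 - Polynomial.X ^ (k + 1)) * (if m - k = 0 then (1 : Polynomial ℚ) else 1 - Polynomial.X)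
      = (1 - Polynomial.X) * (1 - Polynomial.X ^ (k + 1)) := by
    intro k hk; rw [mem_range] at hk
    rw [if_neg (by omega), mul_comm]
  rw [Finset.sum_congr rfl congr1, ← Finset.mul_sum, ← mul_add]
  rw [Finset.sum_range_succ', ← add_assoc, ← Finset.sum_add_distrib]
  simp only [sub_add_cancel, pow_zero, Finset.sum_const, card_range, nsmul_eq_mul, mul_one]
  try push_cast
  try ring

theorem expCt : expPS Ct = Et := by
  refine PowerSeries.ext fun n => ?_
  induction n using Nat.strong_induction_on with
  | _ n ih =>
    rcases n with _ | m
    · rw [coeff_expPS]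
      simp [Et, coeff_mk]
    · have hd := congrArg (coeff m) (deriv_expPS Ct hCt0)
      rw [coeff_derivativeFun'] at hd
      have h2 : coeff m (derivativeFun Ct * expPS Ct)
          = coeff m (derivativeFun Ct * Et) := by
        rw [coeff_mul, coeff_mul]
        refine Finset.sum_congr rfl fun pq hpq => ?_
        rw [Finset.HasAntidiagonal.mem_antidiagonal] at hpq
        rw [ih pq.2 (by omega)]
      rw [h2, dCt_mul_Et, coeff_derivativeFun',
        show ((m : Polynomial ℚ) + 1) = ((m + 1 : ℕ) : Polynomial ℚ) by push_cast; ring] at hd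
      exact mul_right_cancel₀ (Nat.cast_ne_zero.mpr (Nat.succ_ne_zero m)) hd

theorem map_expPS {S R : Type*} [Ring S] [Algebra ℚ S] [Ring R] [Algebra ℚ R]
    (φ : S →ₐ[ℚ] R) (F : PowerSeries S) :
    PowerSeries.map (φ : S →+* R) (expPS F) = expPS (PowerSeries.map (φ : S →+* R) F) := by
  ext n
  rw [coeff_map, coeff_expPS, coeff_expPS, map_sum]
  refine Finset.sum_congr rfl fun k _ => ?_
  rw [← map_pow, coeff_map]
  exact map_smul φ _ _

theorem exp_CR {R : Type*} [Ring R] [Algebra ℚ R] (γ : R) :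
    expPS (PowerSeries.mk fun n => if n = 0 then 0 else (n : ℚ)⁻¹ • (1 - γ ^ n))
      = PowerSeries.mk (fun n => if n = 0 then 1 else 1 - γ) := by
  set φ : Polynomial ℚ →ₐ[ℚ] R := Polynomial.aeval γ with hφ
  have h := congrArg (PowerSeries.map (φ : Polynomial ℚ →+* R)) expCt
  rw [map_expPS] at h
  have hC : PowerSeries.map (φ : Polynomial ℚ →+* R) Ct
      = PowerSeries.mk fun n => if n = 0 then 0 else (n : ℚ)⁻¹ • (1 - γ ^ n) := by
    ext n
    rw [coeff_map, Ct, coeff_mk, coeff_mk]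
    split_ifs with hn
    · exact map_zero _
    · rw [show (φ : Polynomial ℚ →+* R) ((n : ℚ)⁻¹ • (1 - Polynomial.X ^ n))
          = (n : ℚ)⁻¹ • φ (1 - Polynomial.X ^ n) from map_smul φ _ _]
      simp [hφ]
  have hE : PowerSeries.map (φ : Polynomial ℚ →+* R) Et
      = PowerSeries.mk (fun n => if n = 0 then 1 else 1 - γ) := by
    ext n
    rw [coeff_map, Et, coeff_mk, coeff_mk]
    split_ifs with hn
    · exact map_one _
    · simp [hφ]
  rw [hC, hE] at h
  exact h

end Aux

/-- Let `R` be an associative unital `ℚ`-algebra, `A ∈ R`, `γ ∈ R`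
central, and `(P_n)_{n ≥ 1}` a sequence in `R`.  Define `H_n` for `n ≥ 0` by
`∑_{n ≥ 0} H_n z^n = exp(∑_{n ≥ 1} P_n z^n / n)` (so `H_0 = 1`), and set `H_{-1} = 0`.
If `A (H_n - H_{n-1}) = γ^n (H_n - H_{n-1}) A` for all `n ≥ 0`, then
`A P_n - γ^n P_n A = A (1 - γ^n)` for all `n ≥ 1`. -/
theorem stmt_8 {R : Type*} [Ring R] [Algebra ℚ R] (A γ : R)
    (hγ : ∀ x : R, γ * x = x * γ) (P H : ℕ → R)
    (hH : (PowerSeries.mk H : PowerSeries R) =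
      expPS (PowerSeries.mk fun n => if n = 0 then 0 else (n : ℚ)⁻¹ • P n))
    (hA : ∀ n : ℕ, A * (H n - if n = 0 then 0 else H (n - 1)) =
      γ ^ n * ((H n - if n = 0 then 0 else H (n - 1)) * A)) :
    ∀ n : ℕ, 1 ≤ n → A * P n - γ ^ n * (P n * A) = A * (1 - γ ^ n) := by
  -- basic commutation facts for γ
  have hγpow : ∀ (k : ℕ) (r : R), γ ^ k * r = r * γ ^ k := fun k r =>
    (Commute.pow_left (show Commute γ r from hγ r) k : Commute (γ ^ k) r)
  classical
  set x : ℕ → R := fun n => if n = 0 then 0 else (n : ℚ)⁻¹ • P n with hxdef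
  set c : ℕ → R := fun n => if n = 0 then 0 else (n : ℚ)⁻¹ • (1 - γ ^ n) with hcdef
  set y : ℕ → R := fun n => c n + γ ^ n * x n with hydef
  set X : PowerSeries R := PowerSeries.mk x with hX
  set Xg : PowerSeries R := PowerSeries.mk (fun n => γ ^ n * x n) with hXg
  set Cs : PowerSeries R := PowerSeries.mk c with hCs
  set Y : PowerSeries R := PowerSeries.mk y with hY
  have hx0 : x 0 = 0 := by rw [hxdef]; simp
  have hc0 : c 0 = 0 := by rw [hcdef]; simp
  have hy0 : y 0 = 0 := by rw [hydef]; simp [hx0, hc0]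
  have hXco : ∀ i, coeff i X = x i := fun i => by rw [hX, coeff_mk]
  have hYco : ∀ i, coeff i Y = y i := fun i => by rw [hY, coeff_mk]
  have hHc : ∀ n, H n = coeff n (expPS X) := by
    intro n
    have := congrArg (coeff n) hH
    rwa [coeff_mk] at this
  have hX0 : constantCoeff X = 0 := by
    rw [hX, ← coeff_zero_eq_constantCoeff, coeff_mk]; exact hx0
  have hY0 : constantCoeff Y = 0 := by
    rw [hY, ← coeff_zero_eq_constantCoeff, coeff_mk]; exact hy0
  have hXg0 : constantCoeff Xg = 0 := by
    rw [hXg, ← coeff_zero_eq_constantCoeff, coeff_mk]; simp [hx0]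
  have hCs0 : constantCoeff Cs = 0 := by
    rw [hCs, ← coeff_zero_eq_constantCoeff, coeff_mk]; exact hc0
  have hcc : ∀ (n : ℕ) (r : R), coeff n Cs * r = r * coeff n Cs := by
    intro n r
    rw [hCs, coeff_mk, hcdef]
    by_cases hn : n = 0
    · simp [hn]
    · simp only [if_neg hn]
      rw [smul_mul_assoc, mul_smul_comm]
      congr 1
      rw [sub_mul, mul_sub, one_mul, mul_one, hγpow]
  have hYsum : Y = Cs + Xg := by
    rw [hY, hCs, hXg]
    ext n
    simp only [map_add, coeff_mk, hydef]
  have hXgk : ∀ (k n : ℕ), coeff n (Xg ^ k) = γ ^ n * coeff n (X ^ k) := by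
    intro k
    induction k with
    | zero =>
      intro n
      simp only [pow_zero, coeff_one]
      split_ifs with h
      · subst h; rw [pow_zero, one_mul]
      · rw [mul_zero]
    | succ k ih =>
      intro n
      rw [pow_succ', coeff_mul, pow_succ', coeff_mul, Finset.mul_sum]
      refine Finset.sum_congr rfl fun pq hpq => ?_
      rw [Finset.HasAntidiagonal.mem_antidiagonal] at hpq
      rw [hXg, coeff_mk, hX, coeff_mk, ih pq.2]
      rw [← hpq, pow_add]
      rw [mul_assoc, ← mul_assoc (x pq.1), ← hγpow pq.2 (x pq.1), mul_assoc, ← mul_assoc]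
  have hExpXg : ∀ n, coeff n (expPS Xg) = γ ^ n * H n := by
    intro n
    rw [coeff_expPS, hHc n, coeff_expPS, Finset.mul_sum]
    refine Finset.sum_congr rfl fun k _ => ?_
    rw [hXgk k n, mul_smul_comm]
  have hExpY : ∀ n, coeff n (expPS Y)
      = γ ^ n * H n + (1 - γ) * ∑ m ∈ Finset.range n, γ ^ m * H m := by
    intro n
    rw [hYsum, expPS_add hcc hCs0 hXg0]
    have hCsE : expPS Cs = PowerSeries.mk (fun n => if n = 0 then 1 else 1 - γ) := by
      rw [hCs, hcdef]; exact exp_CR γ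
    rw [hCsE, coeff_mul, Finset.Nat.sum_antidiagonal_eq_sum_range_succ_mk]
    have hterm : ∀ p ∈ Finset.range (n + 1),
        coeff p (PowerSeries.mk (fun n => if n = 0 then 1 else 1 - γ))
          * coeff (n - p) (expPS Xg)
        = (if p = 0 then 1 else 1 - γ) * (γ ^ (n - p) * H (n - p)) := by
      intro p _
      rw [coeff_mk, hExpXg]
    rw [Finset.sum_congr rfl hterm, Finset.sum_range_succ']
    simp only [eq_self_iff_true, if_true, one_mul, Nat.sub_zero]
    have hterm2 : ∀ p ∈ Finset.range n,
        (if p + 1 = 0 then (1:R) else 1 - γ) * (γ ^ (n - (p + 1)) * H (n - (p + 1)))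
        = (1 - γ) * (γ ^ (n - 1 - p) * H (n - 1 - p)) := by
      intro p hp
      rw [Finset.mem_range] at hp
      rw [if_neg (Nat.succ_ne_zero p), show n - (p + 1) = n - 1 - p by omega]
    rw [Finset.sum_congr rfl hterm2, ← Finset.mul_sum,
      Finset.sum_range_reflect (fun m => γ ^ m * H m) n, add_comm]
  have hL3 : ∀ n, A * H n
      = (γ ^ n * H n + (1 - γ) * ∑ m ∈ Finset.range n, γ ^ m * H m) * A := by
    intro n
    induction n with
    | zero =>
      have h0 := hA 0
      simp only [eq_self_iff_true, if_true, sub_zero, pow_zero, one_mul] at h0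
      simp only [pow_zero, one_mul, Finset.range_zero, Finset.sum_empty, mul_zero, add_zero]
      exact h0
    | succ n ih =>
      have hs := hA (n + 1)
      simp only [Nat.succ_ne_zero, if_false, Nat.add_sub_cancel] at hs
      rw [Finset.sum_range_succ]
      have e1 : A * H (n + 1) = A * (H (n + 1) - H n) + A * H n := by noncomm_ring
      have key : (1 - γ) * (γ ^ n * H n) = γ ^ n * H n - γ ^ (n + 1) * H n := by
        rw [sub_mul, one_mul, ← mul_assoc, ← pow_succ']
      rw [e1, hs, ih, mul_add (1 - γ), key]
      noncomm_ring
  have hPT : ∀ N : ℕ, (∀ m, m ≤ N → A * x m = y m * A) →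
      ∀ (k j : ℕ), j ≤ N → A * coeff j (X ^ k) = coeff j (Y ^ k) * A := by
    intro N hyp k
    induction k with
    | zero =>
      intro j _
      simp only [pow_zero, coeff_one]
      split_ifs
      · rw [mul_one, one_mul]
      · rw [mul_zero, zero_mul]
    | succ k ih =>
      intro j hj
      rw [pow_succ', coeff_mul, pow_succ', coeff_mul, Finset.mul_sum, Finset.sum_mul]
      refine Finset.sum_congr rfl fun pq hpq => ?_
      rw [Finset.HasAntidiagonal.mem_antidiagonal] at hpq
      rw [hXco pq.1, hYco pq.1, ← mul_assoc, hyp pq.1 (by omega), mul_assoc,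
        ih pq.2 (by omega), ← mul_assoc]
  have hMain : ∀ n : ℕ, A * x n = y n * A := by
    intro n
    induction n using Nat.strong_induction_on with
    | _ n ih =>
      rcases n with _ | m
      · rw [hx0, hy0, mul_zero, zero_mul]
      · have hyp : ∀ j, j ≤ m → A * x j = y j * A := fun j hj => ih j (by omega)
        have start : A * coeff (m + 1) (expPS X) = coeff (m + 1) (expPS Y) * A := by
          rw [← hHc (m + 1), hExpY (m + 1)]
          exact hL3 (m + 1)
        rw [coeff_expPS, coeff_expPS, Finset.mul_sum, Finset.sum_mul] at start
        have h1mem : (1 : ℕ) ∈ Finset.range (m + 1 + 1) := Finset.mem_range.mpr (by omega)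
        rw [← Finset.sum_erase_add (Finset.range (m + 1 + 1)) _ h1mem,
          ← Finset.sum_erase_add (Finset.range (m + 1 + 1)) _ h1mem] at start
        have tcongr : ∀ k ∈ (Finset.range (m + 1 + 1)).erase 1,
            A * ((k.factorial : ℚ)⁻¹ • coeff (m + 1) (X ^ k))
            = ((k.factorial : ℚ)⁻¹ • coeff (m + 1) (Y ^ k)) * A := by
          intro k hk
          obtain ⟨hk1, hkr⟩ := Finset.mem_erase.mp hk
          rw [mul_smul_comm, smul_mul_assoc]
          congr 1
          rcases Nat.eq_zero_or_pos k with rfl | hkpos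
          · simp only [pow_zero, coeff_one, if_neg (Nat.succ_ne_zero m)]
            rw [mul_zero, zero_mul]
          · obtain ⟨k', rfl⟩ : ∃ k', k = k' + 1 := ⟨k - 1, by omega⟩
            have hk'pos : 1 ≤ k' := by omega
            rw [pow_succ', coeff_mul, pow_succ', coeff_mul, Finset.mul_sum, Finset.sum_mul]
            refine Finset.sum_congr rfl fun pq hpq => ?_
            rw [Finset.HasAntidiagonal.mem_antidiagonal] at hpq
            rcases Nat.eq_zero_or_pos pq.1 with hp0 | hppos
            · rw [hXco pq.1, hYco pq.1, hp0, hx0, hy0, zero_mul, zero_mul, mul_zero,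
                zero_mul]
            · rcases eq_or_lt_of_le (show pq.1 ≤ m + 1 by omega) with hpn | hpn
              · have hq0 : pq.2 = 0 := by omega
                rw [hq0, coeff_pow_zero_of_lt hX0 k' 0 (by omega),
                  coeff_pow_zero_of_lt hY0 k' 0 (by omega), mul_zero, mul_zero, mul_zero,
                  zero_mul]
              · rw [hXco pq.1, hYco pq.1, ← mul_assoc, ih pq.1 (by omega), mul_assoc,
                  hPT m hyp k' pq.2 (by omega), ← mul_assoc]
        rw [Finset.sum_congr rfl tcongr] at start
        have hfin := add_left_cancel start
        simpa only [Nat.factorial_one, Nat.cast_one, inv_one, one_smul, pow_one, hXco,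
          hYco] using hfin
  -- conclusion
  intro n hn
  have h := hMain n
  have hnne : ((n : ℚ)) ≠ 0 := Nat.cast_ne_zero.mpr (by omega)
  have hxn : x n = (n : ℚ)⁻¹ • P n := by rw [hxdef]; simp only [if_neg (by omega : n ≠ 0)]
  have hcn : c n = (n : ℚ)⁻¹ • (1 - γ ^ n) := by rw [hcdef]; simp only [if_neg (by omega : n ≠ 0)]
  have hyn : y n = c n + γ ^ n * x n := by rw [hydef]
  rw [hxn, hyn, hcn, hxn] at h
  have h2 := congrArg (fun r => (n : ℚ) • r) h
  rw [← mul_smul_comm, ← smul_mul_assoc, smul_smul, mul_inv_cancel₀ hnne, one_smul,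
    smul_add, smul_smul, mul_inv_cancel₀ hnne, one_smul,
    ← mul_smul_comm, smul_smul, mul_inv_cancel₀ hnne, one_smul] at h2
  -- h2 : A * P n = ((1 - γ ^ n) + γ ^ n * P n) * A
  rw [h2, add_mul, mul_assoc]
  have hcomm : (1 - γ ^ n) * A = A * (1 - γ ^ n) := by
    rw [sub_mul, mul_sub, one_mul, mul_one, hγpow]
  rw [hcomm, add_sub_cancel_right]
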